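/- Let σ(z) = tanh(z) + α with α > 1. Then σ(z) > 0 for all z ∈ ℝ, and there exists μ > 0 such that |z|·σ'(z) ≤ μ·σ(z) for all z ∈ ℝ. -/

import Mathlib

/-- σ(z) = tanh(z)+α with α > 1 is positive and μ-subhomogeneous on ℝ for some μ > 0. -/
theorem shifted_tanh_subhomogeneous (α : ℝ) (hα : 1 < α) :
    (∀ z : ℝ, 0 < Real.tanh z + α) ∧
    ∃ μ : ℝ, 0 < μ ∧ ∀ z : ℝ,
      |z| * deriv (fun w : ℝ => Real.tanh w + α) z ≤ μ * (Real.tanh z + α) := by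
  have htanh : ∀ z : ℝ, -1 < Real.tanh z := by
    intro z
    have hc := Real.cosh_pos z
    have he := Real.exp_pos z
    have hsum := Real.sinh_add_cosh z
    rw [Real.tanh_eq_sinh_div_cosh, neg_lt_iff_pos_add]
    have h : 0 < (Real.sinh z + Real.cosh z) / Real.cosh z := by
      rw [hsum]; exact div_pos he hc
    rw [add_div, div_self hc.ne'] at h
    linarith
  have hpos : ∀ z : ℝ, 0 < Real.tanh z + α := fun z => by
    have := htanh z; linarith
  have hα1 : (0:ℝ) < α - 1 := by linarith
  refine ⟨hpos, 1 / (α - 1), div_pos one_pos hα1, fun z => ?_⟩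
  have hc := Real.cosh_pos z
  have hderiv : deriv (fun w : ℝ => Real.tanh w + α) z = 1 / Real.cosh z ^ 2 := by
    have h1 : HasDerivAt (fun w : ℝ => Real.tanh w + α)
        ((Real.cosh z * Real.cosh z - Real.sinh z * Real.sinh z) / Real.cosh z ^ 2) z := by
      have h := ((Real.hasDerivAt_sinh z).div (Real.hasDerivAt_cosh z) hc.ne').add_const α
      refine h.congr_of_eventuallyEq (Filter.Eventually.of_forall fun w => ?_)
      · simp [Real.tanh_eq_sinh_div_cosh]
    have h2 : (Real.cosh z * Real.cosh z - Real.sinh z * Real.sinh z) / Real.cosh z ^ 2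
        = 1 / Real.cosh z ^ 2 := by
      have := Real.cosh_sq_sub_sinh_sq z
      rw [show Real.cosh z * Real.cosh z - Real.sinh z * Real.sinh z
        = Real.cosh z ^ 2 - Real.sinh z ^ 2 by ring, this]
    rw [h2] at h1
    exact h1.deriv
  rw [hderiv]
  -- key: |z| ≤ cosh z ^ 2
  have h1 : (1 : ℝ) + |z| ≤ Real.exp |z| := by
    have := Real.add_one_le_exp |z|; linarith
  have h2 : Real.cosh z = (Real.exp |z| + Real.exp (-|z|)) / 2 := by
    rw [← Real.cosh_abs, Real.cosh_eq]
  have h3 : (0 : ℝ) < Real.exp (-|z|) := Real.exp_pos _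
  have hkey : |z| ≤ Real.cosh z ^ 2 := by nlinarith [sq_nonneg (|z| - 1), abs_nonneg z]
  have hstep : |z| * (1 / Real.cosh z ^ 2) ≤ 1 := by
    rw [mul_one_div, div_le_one (by positivity)]; exact hkey
  have hσ : α - 1 ≤ Real.tanh z + α := by have := htanh z; linarith
  calc |z| * (1 / Real.cosh z ^ 2) ≤ 1 := hstep
    _ = 1 / (α - 1) * (α - 1) := by field_simp
    _ ≤ 1 / (α - 1) * (Real.tanh z + α) := by
        exact mul_le_mul_of_nonneg_left hσ (le_of_lt (div_pos one_pos hα1))
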